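/- Let 0 ≤ ε < 2 and let (ξ, η) : ℝ → ℝ² be a differentiable solution of the reduced Pikovsky–Topaj system. Then the function t ↦ (ξ(−t), −η(−t)) is also a solution of the same system. In other words, the reduced system is time-reversible with respect to the involution R : (ξ, η) ↦ (ξ, −η). -/

import Mathlib

open Real

/-- `(ξ, η)` is a solution of the reduced (nonautonomous) Pikovsky–Topaj system
`ξ' = 2ε sin ξ sin η / (2 + ε cos(t − η))`,
`η' = (1 − ε cos(t − η) − 2ε cos ξ cos η) / (2 + ε cos(t − η))`. -/
def IsReducedPTSol (ε : ℝ) (ξ η : ℝ → ℝ) : Prop :=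
  ∀ t : ℝ,
    HasDerivAt ξ
      (2 * ε * Real.sin (ξ t) * Real.sin (η t) / (2 + ε * Real.cos (t - η t))) t ∧
    HasDerivAt η
      ((1 - ε * Real.cos (t - η t) - 2 * ε * Real.cos (ξ t) * Real.cos (η t)) /
        (2 + ε * Real.cos (t - η t))) t

/-- The reduced Pikovsky–Topaj system is time-reversible with respect to the involution
`R : (ξ, η) ↦ (ξ, −η)`. -/
theorem reducedPT_reversible (ε : ℝ) (hε₀ : 0 ≤ ε) (hε₂ : ε < 2) (ξ η : ℝ → ℝ)
    (h : IsReducedPTSol ε ξ η) :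
    IsReducedPTSol ε (fun t => ξ (-t)) (fun t => -η (-t)) := by
  intro t
  obtain ⟨h1, h2⟩ := h (-t)
  have key : Real.cos (-t - η (-t)) = Real.cos (t - -η (-t)) := by
    rw [show (-t - η (-t)) = -(t - -η (-t)) by ring, Real.cos_neg]
  constructor
  · have := h1.comp t (hasDerivAt_neg t)
    convert this using 1
    case e'_4 => rfl
    case e'_5 => rfl
    case e'_8 => rfl
    rw [key] at this ⊢
    rw [Real.sin_neg]
    ring
  · have := (h2.neg).comp t (hasDerivAt_neg t)
    convert this using 1
    case e'_4 => rfl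
    case e'_5 => rfl
    case e'_8 => rfl
    rw [key, Real.cos_neg]
    ring
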